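/- Fix h(z), b(z) ∈ ℂ((z)) with h′(z) ≠ 0 and c ∈ ℂ. Setting L := −(h/h′)∂ + b (a first-order operator on ℂ((z))), define ρ(L_{−1}) = h^{−1}, ρ(L_0) = L, and ρ(L_1) = h·(L² − L − c(c+1)). Then [ρ(L_0),ρ(L_{−1})] = ρ(L_{−1}), [ρ(L_0),ρ(L_1)] = −ρ(L_1), and [ρ(L_1),ρ(L_{−1})] = 2ρ(L_0); i.e. ρ is a representation of sl(2) with ord ρ(L_{−1}) = 0 and ord ρ(L_1) = 2. -/

import Mathlib

set_option synthInstance.maxHeartbeats 1000000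
set_option maxHeartbeats 1000000
set_option maxSynthPendingDepth 4

noncomputable section

/-- The derivative `∂ = d/dz` on `ℂ((z))`, as a `ℂ`-linear endomorphism. -/
def Dz : Module.End ℂ (LaurentSeries ℂ) := LaurentSeries.derivative ℂ

/-- Multiplication by a Laurent series `g`, as a `ℂ`-linear endomorphism of `ℂ((z))`. -/
def mz (g : LaurentSeries ℂ) : Module.End ℂ (LaurentSeries ℂ) where
  toFun f := g * f
  map_add' := mul_add g
  map_smul' c f := by
    show g * (c • f) = c • (g * f)
    rw [← HahnSeries.single_zero_mul_eq_smul, ← HahnSeries.single_zero_mul_eq_smul, mul_left_comm]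

/-- `P` is a differential operator on `ℂ((z))` of order `≤ k`: `P = Σ_{j=0}^{k} ξ_j ∂^j`. -/
def DiffOrderLE (P : Module.End ℂ (LaurentSeries ℂ)) (k : ℕ) : Prop :=
  ∃ ξ : ℕ → LaurentSeries ℂ, P = ∑ j ∈ Finset.range (k + 1), mz (ξ j) * Dz ^ j

/-- `P` is a differential operator on `ℂ((z))` of order `< k` (for `k = 0` this means `P = 0`). -/
def DiffOrderLT (P : Module.End ℂ (LaurentSeries ℂ)) (k : ℕ) : Prop :=
  ∃ ξ : ℕ → LaurentSeries ℂ, P = ∑ j ∈ Finset.range k, mz (ξ j) * Dz ^ j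

/-- `P` is a differential operator on `ℂ((z))` of order exactly `k`. -/
def HasOrder (P : Module.End ℂ (LaurentSeries ℂ)) (k : ℕ) : Prop :=
  DiffOrderLE P k ∧ ¬ DiffOrderLT P k

/- ### Auxiliary lemmas -/

lemma mz_apply (g f : LaurentSeries ℂ) : mz g f = g * f := rfl

lemma Dz_coeff (u : LaurentSeries ℂ) (m : ℤ) : (Dz u).coeff m = (m + 1) • u.coeff (m + 1) := by
  simp [Dz, LaurentSeries.derivative_apply, LaurentSeries.hasseDeriv_coeff,
    Ring.choose_one_right]

open HahnSeries Finset in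
/-- The Leibniz rule for `Dz`. -/
lemma Dz_mul (f g : LaurentSeries ℂ) : Dz (f * g) = Dz f * g + f * Dz g := by
  ext n
  have hsf : (Dz f).support ⊆ (fun x => x - 1) '' f.support := by
    intro m hm
    rw [HahnSeries.mem_support, Dz_coeff] at hm
    exact ⟨m + 1, by simpa using fun hh => hm (by simp [hh]), by ring⟩
  have hsg : (Dz g).support ⊆ (fun x => x - 1) '' g.support := by
    intro m hm
    rw [HahnSeries.mem_support, Dz_coeff] at hm
    exact ⟨m + 1, by simpa using fun hh => hm (by simp [hh]), by ring⟩
  have pf : ((fun x : ℤ => x - 1) '' f.support).IsPWO :=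
    f.isPWO_support.image_of_monotone (fun x y hxy => by simpa using hxy)
  have pg : ((fun x : ℤ => x - 1) '' g.support).IsPWO :=
    g.isPWO_support.image_of_monotone (fun x y hxy => by simpa using hxy)
  rw [HahnSeries.coeff_add, HahnSeries.coeff_mul_left' pf hsf,
    HahnSeries.coeff_mul_right' pg hsg, Dz_coeff, HahnSeries.coeff_mul]
  have e1 : ∑ ij ∈ Finset.antidiagonal pf g.isPWO_support n, (Dz f).coeff ij.1 * g.coeff ij.2
      = ∑ ij ∈ Finset.antidiagonal f.isPWO_support g.isPWO_support (n + 1),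
          (ij.1 • f.coeff ij.1) * g.coeff ij.2 := by
    apply Finset.sum_nbij' (fun p => (p.1 + 1, p.2)) (fun p => (p.1 - 1, p.2))
    · rintro ⟨i, j⟩ hij
      simp only [Finset.mem_antidiagonal, Set.mem_image, HahnSeries.mem_support] at hij ⊢
      obtain ⟨⟨x, hx, hxi⟩, hj, hn⟩ := hij
      exact ⟨by rwa [show i + 1 = x by omega], hj, by omega⟩
    · rintro ⟨i, j⟩ hij
      simp only [Finset.mem_antidiagonal, Set.mem_image, HahnSeries.mem_support] at hij ⊢
      obtain ⟨hi, hj, hn⟩ := hij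
      exact ⟨⟨i, hi, by ring⟩, hj, by omega⟩
    · rintro ⟨i, j⟩ _; simp
    · rintro ⟨i, j⟩ _; simp
    · rintro ⟨i, j⟩ _
      rw [Dz_coeff]
  have e2 : ∑ ij ∈ Finset.antidiagonal f.isPWO_support pg n, f.coeff ij.1 * (Dz g).coeff ij.2
      = ∑ ij ∈ Finset.antidiagonal f.isPWO_support g.isPWO_support (n + 1),
          f.coeff ij.1 * (ij.2 • g.coeff ij.2) := by
    apply Finset.sum_nbij' (fun p => (p.1, p.2 + 1)) (fun p => (p.1, p.2 - 1))
    · rintro ⟨i, j⟩ hij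
      simp only [Finset.mem_antidiagonal, Set.mem_image, HahnSeries.mem_support] at hij ⊢
      obtain ⟨hi, ⟨x, hx, hxj⟩, hn⟩ := hij
      exact ⟨hi, by rwa [show j + 1 = x by omega], by omega⟩
    · rintro ⟨i, j⟩ hij
      simp only [Finset.mem_antidiagonal, Set.mem_image, HahnSeries.mem_support] at hij ⊢
      obtain ⟨hi, hj, hn⟩ := hij
      exact ⟨hi, ⟨j, hj, by ring⟩, by omega⟩
    · rintro ⟨i, j⟩ _; simp
    · rintro ⟨i, j⟩ _; simp
    · rintro ⟨i, j⟩ _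
      rw [Dz_coeff]
  rw [e1, e2, ← Finset.sum_add_distrib, Finset.smul_sum]
  apply Finset.sum_congr rfl
  rintro ⟨i, j⟩ hij
  rw [Finset.mem_antidiagonal] at hij
  rw [← hij.2.2, smul_mul_assoc, mul_smul_comm, ← add_smul]

lemma Dz_single (n : ℤ) (x : ℂ) :
    Dz (HahnSeries.single n x) = HahnSeries.single (n - 1) ((n : ℂ) * x) := by
  simp [Dz, LaurentSeries.derivative_apply, Ring.choose_one_right, zsmul_eq_mul]

lemma Dz_one : Dz (1 : LaurentSeries ℂ) = 0 := by
  have : (1 : LaurentSeries ℂ) = HahnSeries.single (0 : ℤ) (1 : ℂ) := by simp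
  rw [this, Dz_single]; simp

lemma Dz_inv (u : LaurentSeries ℂ) (hu : u ≠ 0) : Dz u⁻¹ = -(Dz u * (u⁻¹ * u⁻¹)) := by
  have h2 : Dz u * u⁻¹ + u * Dz u⁻¹ = 0 := by
    rw [← Dz_mul, mul_inv_cancel₀ hu, Dz_one]
  have h3 : u * Dz u⁻¹ = -(Dz u * u⁻¹) := by linear_combination h2
  calc Dz u⁻¹ = u⁻¹ * (u * Dz u⁻¹) := by field_simp
    _ = -(Dz u * (u⁻¹ * u⁻¹)) := by rw [h3]; ring

lemma mz_mul (u v : LaurentSeries ℂ) : mz (u * v) = mz u * mz v := by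
  refine LinearMap.ext fun f => ?_
  simp [mz_apply, Module.End.mul_apply, mul_assoc]

lemma mz_one : mz (1 : LaurentSeries ℂ) = 1 := by
  refine LinearMap.ext fun f => ?_
  simp [mz_apply]

lemma mz_neg (u : LaurentSeries ℂ) : mz (-u) = -(mz u) :=
  LinearMap.ext fun f => neg_mul u f

/-- Fix `h, b ∈ ℂ((z))` with `h′ ≠ 0` and `c ∈ ℂ`.  Setting `L := −(h/h′)∂ + b`, the operators
`ρ(L₋₁) = h⁻¹`, `ρ(L₀) = L`, `ρ(L₁) = h·(L² − L − c(c+1))` define a representation of `sl(2)`: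
`[ρL₀, ρL₋₁] = ρL₋₁`, `[ρL₀, ρL₁] = −ρL₁`, `[ρL₁, ρL₋₁] = 2ρL₀`; moreover
`ord ρ(L₋₁) = 0` and `ord ρ(L₁) = 2`. -/
theorem sl2_representation_S0
    (h b : LaurentSeries ℂ) (c : ℂ) (hder : Dz h ≠ 0)
    (L ρm1 ρ0 ρ1 : Module.End ℂ (LaurentSeries ℂ))
    (hL : L = mz (-(h / Dz h)) * Dz + mz b)
    (hm1 : ρm1 = mz h⁻¹)
    (h0 : ρ0 = L)
    (h1 : ρ1 = mz h * (L ^ 2 - L - (c * (c + 1)) • 1)) :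
    ⁅ρ0, ρm1⁆ = ρm1 ∧ ⁅ρ0, ρ1⁆ = -ρ1 ∧ ⁅ρ1, ρm1⁆ = (2 : ℂ) • ρ0 ∧
      HasOrder ρm1 0 ∧ HasOrder ρ1 2 := by
  have hne : h ≠ 0 := fun hh => hder (by rw [hh]; exact map_zero _)
  set a : LaurentSeries ℂ := -(h / Dz h) with ha
  have hinv : Dz h⁻¹ = -(Dz h * (h⁻¹ * h⁻¹)) := Dz_inv h hne
  -- key series identities
  have fact2 : a * Dz h = -h := by
    rw [ha, div_eq_mul_inv,
      show -(h * (Dz h)⁻¹) * Dz h = -(h * (Dz h * (Dz h)⁻¹)) from by ring,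
      mul_inv_cancel₀ hder, mul_one]
  have fact1 : a * Dz h⁻¹ = h⁻¹ := by
    rw [ha, hinv, div_eq_mul_inv,
      show -(h * (Dz h)⁻¹) * -(Dz h * (h⁻¹ * h⁻¹)) = (h * h⁻¹) * (Dz h * (Dz h)⁻¹) * h⁻¹ from by
        ring,
      mul_inv_cancel₀ hne, mul_inv_cancel₀ hder, one_mul, one_mul]
  -- the basic commutator
  have brL : ∀ u : LaurentSeries ℂ, ⁅L, mz u⁆ = mz (a * Dz u) := by
    intro u
    rw [LieRing.of_associative_ring_bracket, hL]
    refine LinearMap.ext fun f => ?_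
    simp only [LinearMap.sub_apply, LinearMap.add_apply, Module.End.mul_apply, mz_apply, Dz_mul]
    ring
  have rel1 : ⁅ρ0, ρm1⁆ = ρm1 := by
    rw [h0, hm1, brL h⁻¹, fact1]
  -- second relation
  obtain ⟨Q, hQ⟩ : ∃ Q : Module.End ℂ (LaurentSeries ℂ),
      Q = L ^ 2 - L - (c * (c + 1)) • 1 := ⟨_, rfl⟩
  rw [← hQ] at h1
  have hLQ : L * Q - Q * L = 0 := by
    have hc : L * Q = Q * L := by
      rw [hQ]
      simp only [mul_sub, sub_mul, mul_smul_comm, smul_mul_assoc, one_mul, mul_one, pow_two,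
        mul_assoc]
    exact sub_eq_zero_of_eq hc
  have hbr : L * mz h - mz h * L = mz (a * Dz h) := by
    have := brL h
    rwa [LieRing.of_associative_ring_bracket] at this
  have rel2 : ⁅ρ0, ρ1⁆ = -ρ1 := by
    rw [h0, h1, LieRing.of_associative_ring_bracket]
    calc L * (mz h * Q) - mz h * Q * L
        = (L * mz h - mz h * L) * Q + mz h * (L * Q - Q * L) := by noncomm_ring
      _ = -(mz h * Q) := by
          rw [hbr, hLQ, fact2, mz_neg, mul_zero, add_zero]
          exact neg_mul _ _
  -- third relation
  have hu1 : mz h * mz h⁻¹ = 1 := by rw [← mz_mul, mul_inv_cancel₀ hne, mz_one]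
  have hu2 : mz h⁻¹ * mz h = 1 := by rw [← mz_mul, inv_mul_cancel₀ hne, mz_one]
  have hbru : L * mz h⁻¹ - mz h⁻¹ * L = mz h⁻¹ := by
    have := brL h⁻¹
    rw [LieRing.of_associative_ring_bracket] at this
    rw [this, fact1]
  have rel3 : ⁅ρ1, ρm1⁆ = (2 : ℂ) • ρ0 := by
    rw [h1, hm1, h0, LieRing.of_associative_ring_bracket]
    have step1 : mz h * Q * mz h⁻¹ - mz h⁻¹ * (mz h * Q)
        = mz h * (Q * mz h⁻¹ - mz h⁻¹ * Q) + (mz h * mz h⁻¹ - mz h⁻¹ * mz h) * Q := by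
      noncomm_ring
    have step2 : Q * mz h⁻¹ - mz h⁻¹ * Q
        = L * (L * mz h⁻¹ - mz h⁻¹ * L) + (L * mz h⁻¹ - mz h⁻¹ * L) * L
          - (L * mz h⁻¹ - mz h⁻¹ * L) := by
      rw [hQ]; noncomm_ring
    rw [step1, step2, hbru, hu1, hu2]
    simp only [sub_self, zero_mul, add_zero]
    have step3 : L * mz h⁻¹ = mz h⁻¹ * L + mz h⁻¹ := by
      rw [sub_eq_iff_eq_add.mp hbru]; abel
    rw [step3]
    calc mz h * (mz h⁻¹ * L + mz h⁻¹ + mz h⁻¹ * L - mz h⁻¹)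
        = (mz h * mz h⁻¹) * L + (mz h * mz h⁻¹) * L
            + ((mz h * mz h⁻¹) - (mz h * mz h⁻¹)) := by noncomm_ring
      _ = (2 : ℂ) • L := by rw [hu1]; rw [two_smul]; simp
  -- orders
  have mz_inj0 : ∀ u : LaurentSeries ℂ, mz u = 0 → u = 0 := by
    intro u hu
    have := LinearMap.congr_fun hu 1
    simpa [mz_apply] using this
  have ho1 : HasOrder ρm1 0 := by
    constructor
    · exact ⟨fun _ => h⁻¹, by rw [hm1]; simp [Finset.sum_range_one]⟩
    · rintro ⟨ξ, hξ⟩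
      rw [Finset.range_zero, Finset.sum_empty, hm1] at hξ
      exact inv_ne_zero hne (mz_inj0 _ hξ)
  have key : ρ1 = mz (h * (a * Dz b + b * b - b - HahnSeries.single (0 : ℤ) (c * (c + 1))))
      + mz (h * (a * Dz a + a * b + b * a - a)) * Dz
      + mz (h * (a * a)) * Dz ^ 2 := by
    rw [h1, hQ, hL]
    refine LinearMap.ext fun f => ?_
    simp only [LinearMap.add_apply, Module.End.mul_apply, LinearMap.sub_apply,
      LinearMap.smul_apply, Module.End.one_apply, mz_apply, pow_two, Dz_mul, map_add,
      ← HahnSeries.single_zero_mul_eq_smul]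
    ring
  have hz1 : Dz (HahnSeries.single (1 : ℤ) (1 : ℂ)) = 1 := by
    rw [Dz_single]
    simp
  have ho2 : HasOrder ρ1 2 := by
    constructor
    · refine ⟨fun j => if j = 0 then
          h * (a * Dz b + b * b - b - HahnSeries.single (0 : ℤ) (c * (c + 1)))
        else if j = 1 then h * (a * Dz a + a * b + b * a - a) else h * (a * a), ?_⟩
      rw [key]
      norm_num [Finset.sum_range_succ, Finset.sum_range_zero]
    · rintro ⟨ξ, hξ⟩
      rw [Finset.sum_range_succ, Finset.sum_range_one] at hξ
      have E := key.symm.trans hξ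
      set z : LaurentSeries ℂ := HahnSeries.single (1 : ℤ) (1 : ℂ) with hzdef
      have E1 := LinearMap.congr_fun E 1
      have E2 := LinearMap.congr_fun E z
      have E3 := LinearMap.congr_fun E (z * z)
      simp only [LinearMap.add_apply, Module.End.mul_apply, mz_apply, pow_two, pow_zero,
        pow_one, Module.End.one_apply, Dz_one, Dz_mul, hz1, map_add, map_zero, mul_zero,
        add_zero, mul_one, one_mul, zero_add] at E1 E2 E3
      have hzero : h * (a * a) * (1 + 1) = 0 := by
        linear_combination E3 - (z + z) * E2 + (z * z) * E1
      have h2 : ((1 : LaurentSeries ℂ) + 1) ≠ 0 := by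
        intro hcon
        have := congrArg (fun s : LaurentSeries ℂ => s.coeff 0) hcon
        simp [HahnSeries.coeff_add] at this
      have ha0 : a ≠ 0 := by rw [ha]; exact neg_ne_zero.mpr (div_ne_zero hne hder)
      exact absurd hzero (mul_ne_zero (mul_ne_zero hne (mul_ne_zero ha0 ha0)) h2)
  exact ⟨rel1, rel2, rel3, ho1, ho2⟩
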